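/- Let C be a class of graphs with polynomial χ-bounding function f(x) = x^c. If P is a C-right-module-partition of G such that (G, P) is d-almost mixed free, then χ(G) ≤ ω(G)^{cd}. -/

import Mathlib

/-- An ordered graph is a graph on `Fin n` with the natural vertex order.
`part : Fin n → Fin k` is a right module partition of `G` if its parts are
consecutive intervals (`part` is monotone and surjective), each part is an
independent set, and for `i < j` the part `V_i` is a module in `G[V_i ∪ V_j]`. -/
def IsRMP {n k : ℕ} (G : SimpleGraph (Fin n)) (part : Fin n → Fin k) : Prop :=
  Monotone part ∧ Function.Surjective part ∧
  (∀ x y, part x = part y → ¬ G.Adj x y) ∧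
  (∀ u u' w, part u = part u' → part u < part w → (G.Adj u w ↔ G.Adj u' w))

/-- `Q` is a transversal minor of `(G, part)`: choose nonempty subsets
`W a ⊆ V_{j a}` for a strictly increasing selection `j` of parts; `Q` records
the existence of edges between the chosen subsets. -/
def IsTransversalMinor {n k ℓ : ℕ} (G : SimpleGraph (Fin n))
    (part : Fin n → Fin k) (Q : SimpleGraph (Fin ℓ)) : Prop :=
  ∃ (j : Fin ℓ → Fin k) (W : Fin ℓ → Finset (Fin n)),
    StrictMono j ∧ (∀ a, (W a).Nonempty) ∧ (∀ a, ∀ v ∈ W a, part v = j a) ∧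
    ∀ a b, Q.Adj a b ↔ a ≠ b ∧ ∃ u ∈ W a, ∃ v ∈ W b, G.Adj u v

/-- `part` is a `C`-right-module-partition of `G` if it is an RMP all of whose
transversal minors belong to `C`. -/
def IsCRMP (C : ∀ m : ℕ, SimpleGraph (Fin m) → Prop) {n k : ℕ}
    (G : SimpleGraph (Fin n)) (part : Fin n → Fin k) : Prop :=
  IsRMP G part ∧
  ∀ (ℓ : ℕ) (Q : SimpleGraph (Fin ℓ)), IsTransversalMinor G part Q → C ℓ Q

/-- `Q` is the quotient `G/P` : parts are contracted to single vertices, with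
an edge `i j` iff some edge of `G` joins `V_i` and `V_j`. -/
def IsQuotient {n k : ℕ} (G : SimpleGraph (Fin n)) (part : Fin n → Fin k)
    (Q : SimpleGraph (Fin k)) : Prop :=
  ∀ i j, Q.Adj i j ↔ i ≠ j ∧ ∃ u v, part u = i ∧ part v = j ∧ G.Adj u v

def ZoneHorizontal {m n : ℕ} (M : Matrix (Fin m) (Fin n) (Fin 3))
    (R : Fin m → Prop) (C : Fin n → Prop) : Prop :=
  ∀ i, R i → ∀ j j', C j → C j' → M i j = M i j'

def ZoneVertical {m n : ℕ} (M : Matrix (Fin m) (Fin n) (Fin 3))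
    (R : Fin m → Prop) (C : Fin n → Prop) : Prop :=
  ∀ j, C j → ∀ i i', R i → R i' → M i j = M i' j

/-- A zone is mixed if it is neither horizontal nor vertical, or if it has at
least two rows and two columns and contains a `*` (= `2`) entry. -/
def ZoneMixed {m n : ℕ} (M : Matrix (Fin m) (Fin n) (Fin 3))
    (R : Fin m → Prop) (C : Fin n → Prop) : Prop :=
  (¬ ZoneHorizontal M R C ∧ ¬ ZoneVertical M R C) ∨
    ((∃ i i', R i ∧ R i' ∧ i ≠ i') ∧ (∃ j j', C j ∧ C j' ∧ j ≠ j') ∧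
      ∃ i j, R i ∧ C j ∧ M i j = 2)

open Classical in
/-- The adjacency matrix of `G` in the natural order of `Fin n`, with `*`
(= `2`) on the diagonal. -/
noncomputable def adjMat {n : ℕ} (G : SimpleGraph (Fin n)) :
    Matrix (Fin n) (Fin n) (Fin 3) :=
  fun i j => if i = j then 2 else if G.Adj i j then 1 else 0

/-- `(G, part)` is `d`-almost mixed free: every coarsening of the partition
into `d` consecutive blocks (a monotone surjective map `c : Fin k → Fin d`)
has some off-diagonal zone which is not mixed. -/
def AlmostMixedFreePair {n k : ℕ} (G : SimpleGraph (Fin n))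
    (part : Fin n → Fin k) (d : ℕ) : Prop :=
  ∀ c : Fin k → Fin d, Monotone c → Function.Surjective c →
    ∃ i j : Fin d, i ≠ j ∧
      ¬ ZoneMixed (adjMat G) (fun x => c (part x) = i) (fun y => c (part y) = j)

lemma adjMat_symm {n : ℕ} {G : SimpleGraph (Fin n)} (x y : Fin n) :
    adjMat G x y = adjMat G y x := by
  unfold adjMat
  by_cases h : x = y
  · subst h; rfl
  · rw [if_neg h, if_neg (Ne.symm h)]
    by_cases ha : G.Adj x y
    · rw [if_pos ha, if_pos ha.symm]
    · rw [if_neg ha, if_neg (fun h' => ha h'.symm)]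

lemma adjMat_eq_one {n : ℕ} {G : SimpleGraph (Fin n)} {x y : Fin n} (h : G.Adj x y) :
    adjMat G x y = 1 := by
  unfold adjMat; rw [if_neg h.ne, if_pos h]

lemma adj_of_adjMat_eq_one {n : ℕ} {G : SimpleGraph (Fin n)} {x y : Fin n}
    (h : adjMat G x y = 1) : G.Adj x y := by
  unfold adjMat at h
  by_cases hxy : x = y
  · rw [if_pos hxy] at h; exact absurd h (by decide)
  · rw [if_neg hxy] at h
    by_cases ha : G.Adj x y
    · exact ha
    · rw [if_neg ha] at h; exact absurd h (by decide)

lemma zoneMixed_mono {m : ℕ} {M : Matrix (Fin m) (Fin m) (Fin 3)}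
    {R R' C C' : Fin m → Prop}
    (hR : ∀ i, R' i → R i) (hC : ∀ j, C' j → C j)
    (h : ZoneMixed M R' C') : ZoneMixed M R C := by
  rcases h with ⟨hH, hV⟩ | ⟨⟨i, i', hi, hi', hii⟩, ⟨j, j', hj, hj', hjj⟩, ⟨i0, j0, hi0, hj0, h2⟩⟩
  · left
    refine ⟨fun hHR => hH ?_, fun hVR => hV ?_⟩
    · exact fun i hi j j' hj hj' => hHR i (hR i hi) j j' (hC j hj) (hC j' hj')
    · exact fun j hj i i' hi hi' => hVR j (hC j hj) i i' (hR i hi) (hR i' hi')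
  · right
    exact ⟨⟨i, i', hR _ hi, hR _ hi', hii⟩, ⟨j, j', hC _ hj, hC _ hj', hjj⟩,
      ⟨i0, j0, hR _ hi0, hC _ hj0, h2⟩⟩

lemma zoneMixed_swap {m : ℕ} {M : Matrix (Fin m) (Fin m) (Fin 3)}
    (hsym : ∀ x y, M x y = M y x) {R C : Fin m → Prop}
    (h : ZoneMixed M R C) : ZoneMixed M C R := by
  rcases h with ⟨hH, hV⟩ | ⟨hrows, hcols, ⟨i0, j0, hi0, hj0, h2⟩⟩
  · left
    constructor
    · intro hH2
      exact hV (fun j hj i i' hi hi' => by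
        rw [hsym i j, hsym i' j]; exact hH2 j hj i i' hi hi')
    · intro hV2
      exact hH (fun i hi j j' hj hj' => by
        rw [hsym i j, hsym i j']; exact hV2 i hi j j' hj hj')
  · right
    exact ⟨hcols, hrows, ⟨j0, i0, hj0, hi0, by rw [hsym]; exact h2⟩⟩

section Main

variable {n k : ℕ} (G : SimpleGraph (Fin n)) (part : Fin n → Fin k)

/-- `X` is a clique in the quotient graph. -/
def QCliqueOn (X : Finset (Fin k)) : Prop :=
  ∀ i ∈ X, ∀ j ∈ X, i ≠ j → ∃ u v, part u = i ∧ part v = j ∧ G.Adj u v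

/-- every clique of `G` with all parts inside `X` has size at most `w`. -/
def CliqueBnd (w : ℕ) (X : Finset (Fin k)) : Prop :=
  ∀ K : Finset (Fin n), G.IsClique (K : Set (Fin n)) →
    (∀ v ∈ K, part v ∈ X) → K.card ≤ w

/-- relative almost-mixed-freeness on the parts of `X`. -/
def RelAMF (X : Finset (Fin k)) (e : ℕ) : Prop :=
  ∀ c : Fin k → Fin e, Monotone c → (∀ t : Fin e, ∃ x ∈ X, c x = t) →
    ∃ i j : Fin e, i ≠ j ∧
      ¬ ZoneMixed (adjMat G) (fun x => part x ∈ X ∧ c (part x) = i)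
        (fun y => part y ∈ X ∧ c (part y) = j)

lemma relAMF_of_AMF {d : ℕ} (h : AlmostMixedFreePair G part d) (X : Finset (Fin k)) :
    RelAMF G part X d := by
  intro c hc hcs
  obtain ⟨i, j, hij, hnm⟩ := h c hc (fun t => by
    obtain ⟨x, _, hx⟩ := hcs t; exact ⟨x, hx⟩)
  exact ⟨i, j, hij, fun hm =>
    hnm (zoneMixed_mono (fun x hx => hx.2) (fun y hy => hy.2) hm)⟩

lemma relAMF_mono {X X' : Finset (Fin k)} (hs : X' ⊆ X) {e : ℕ}
    (h : RelAMF G part X e) : RelAMF G part X' e := by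
  intro c hc hcs
  obtain ⟨i, j, hij, hnm⟩ := h c hc (fun t => by
    obtain ⟨x, hx, hcx⟩ := hcs t; exact ⟨x, hs hx, hcx⟩)
  exact ⟨i, j, hij, fun hm =>
    hnm (zoneMixed_mono (fun x hx => ⟨hs hx.1, hx.2⟩) (fun y hy => ⟨hs hy.1, hy.2⟩) hm)⟩

/-- Core contradiction: a non-mixed zone between the parts `≤ p` of `X` (which contain a
`w`-clique through part `p`) and a block containing part `t > p` yields a `(w+1)`-clique. -/
lemma core_contra (hRMP : IsRMP G part) {X : Finset (Fin k)} {w : ℕ}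
    (hQ : QCliqueOn G part X) (hB : CliqueBnd G part w X)
    {p t : Fin k} (_hpX : p ∈ X) (htX : t ∈ X) (hpt : p < t)
    {K : Finset (Fin n)} (hKcl : G.IsClique (K : Set (Fin n)))
    (hKX : ∀ v ∈ K, part v ∈ X ∧ part v ≤ p) (hKw : w ≤ K.card)
    {z : Fin n} (hzK : z ∈ K) (hzp : part z = p)
    {R Cc : Fin n → Prop}
    (hRz : ∀ x : Fin n, part x ∈ X → part x ≤ p → R x)
    (hCt : ∀ y : Fin n, part y = t → Cc y)
    (hnm : ¬ ZoneMixed (adjMat G) R Cc) : False := by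
  obtain ⟨_hmono, _hsurj, _hind, hmod⟩ := hRMP
  have hHV : ZoneHorizontal (adjMat G) R Cc ∨ ZoneVertical (adjMat G) R Cc := by
    by_contra hc
    push_neg at hc
    exact hnm (Or.inl ⟨hc.1, hc.2⟩)
  obtain ⟨u₀, v₀, hu₀, hv₀, hadj₀⟩ := hQ p _hpX t htX (ne_of_lt hpt)
  have hmain : ∀ x ∈ K, G.Adj x v₀ := by
    intro x hxK
    obtain ⟨hxX, hxp⟩ := hKX x hxK
    rcases hHV with hH | hV
    · obtain ⟨u₁, v₁, hu₁, hv₁, hadj₁⟩ :=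
        hQ (part x) hxX t htX (ne_of_lt (lt_of_le_of_lt hxp hpt))
      have hxv₁ : G.Adj x v₁ := by
        have := hmod x u₁ v₁ hu₁.symm (by rw [hv₁]; exact lt_of_le_of_lt hxp hpt)
        exact this.mpr hadj₁
      have heq : adjMat G x v₀ = adjMat G x v₁ :=
        hH x (hRz x hxX hxp) v₀ v₁ (hCt v₀ hv₀) (hCt v₁ hv₁)
      exact adj_of_adjMat_eq_one (heq.trans (adjMat_eq_one hxv₁))
    · have hzv₀ : G.Adj z v₀ := by
        have := hmod z u₀ v₀ (by rw [hzp, hu₀]) (by rw [hzp, hv₀]; exact hpt)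
        exact this.mpr hadj₀
      have heq : adjMat G x v₀ = adjMat G z v₀ :=
        hV v₀ (hCt v₀ hv₀) x z (hRz x hxX hxp) (hRz z (hKX z hzK).1 (le_of_eq hzp))
      exact adj_of_adjMat_eq_one (heq.trans (adjMat_eq_one hzv₀))
  have hv₀K : v₀ ∉ K := fun hmem =>
    absurd (hKX v₀ hmem).2 (by rw [hv₀]; exact not_le.mpr hpt)
  have hcl' : G.IsClique ((insert v₀ K : Finset (Fin n)) : Set (Fin n)) := by
    rw [Finset.coe_insert]
    exact hKcl.insert (fun b hb _ => (hmain b hb).symm)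
  have hle := hB (insert v₀ K) hcl' (fun v hv => by
    rcases Finset.mem_insert.mp hv with h | h
    · subst h; rw [hv₀]; exact htX
    · exact (hKX v h).1)
  rw [Finset.card_insert_of_notMem hv₀K] at hle
  omega

end Main

section Suffix
variable {n k : ℕ} (G : SimpleGraph (Fin n)) (part : Fin n → Fin k)

lemma relAMF_suffix (hRMP : IsRMP G part) {X : Finset (Fin k)} {w e' : ℕ}
    (hQ : QCliqueOn G part X) (hB : CliqueBnd G part w X)
    {p : Fin k} (hpX : p ∈ X)
    {K : Finset (Fin n)} (hKcl : G.IsClique (K : Set (Fin n)))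
    (hKX : ∀ v ∈ K, part v ∈ X ∧ part v ≤ p) (hKw : w ≤ K.card)
    {z : Fin n} (hzK : z ∈ K) (hzp : part z = p)
    (hrel : RelAMF G part X (e' + 1)) :
    RelAMF G part (X.filter (fun q => p < q)) e' := by
  classical
  intro c' hc' hcs'
  set c : Fin k → Fin (e' + 1) := fun y => if y ≤ p then 0 else (c' y).succ with hcdef
  have h0 : ∀ y : Fin k, y ≤ p → c y = 0 := by
    intro y hy; simp only [hcdef]; rw [if_pos hy]
  have hS : ∀ y : Fin k, ¬ y ≤ p → c y = (c' y).succ := by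
    intro y hy; simp only [hcdef]; rw [if_neg hy]
  have hcmono : Monotone c := by
    intro a b hab
    by_cases ha : a ≤ p
    · rw [h0 a ha]; exact Fin.zero_le _
    · have hb : ¬ b ≤ p := fun h => ha (le_trans hab h)
      rw [hS a ha, hS b hb]
      exact Fin.succ_le_succ_iff.mpr (hc' hab)
  have hcsurj : ∀ t : Fin (e' + 1), ∃ x ∈ X, c x = t := by
    intro t
    rcases Fin.eq_zero_or_eq_succ t with rfl | ⟨t₀, rfl⟩
    · exact ⟨p, hpX, h0 p le_rfl⟩
    · obtain ⟨x, hx, hcx⟩ := hcs' t₀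
      obtain ⟨hxX, hpx⟩ := Finset.mem_filter.mp hx
      exact ⟨x, hxX, by rw [hS x (not_le.mpr hpx), hcx]⟩
  have hpred0 : ∀ x : Fin n,
      ((part x ∈ X ∧ c (part x) = 0) ↔ (part x ∈ X ∧ part x ≤ p)) := by
    intro x
    constructor
    · rintro ⟨h1, h2⟩
      refine ⟨h1, ?_⟩
      by_contra hle
      rw [hS _ hle] at h2
      exact Fin.succ_ne_zero _ h2
    · rintro ⟨h1, h2⟩
      exact ⟨h1, h0 _ h2⟩
  have hpredS : ∀ (t₀ : Fin e') (x : Fin n),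
      ((part x ∈ X ∧ c (part x) = t₀.succ) ↔
        (part x ∈ X.filter (fun q => p < q) ∧ c' (part x) = t₀)) := by
    intro t₀ x
    constructor
    · rintro ⟨h1, h2⟩
      by_cases hle : part x ≤ p
      · rw [h0 _ hle] at h2
        exact absurd h2.symm (Fin.succ_ne_zero _)
      · rw [hS _ hle] at h2
        exact ⟨Finset.mem_filter.mpr ⟨h1, not_le.mp hle⟩, Fin.succ_injective _ h2⟩
    · rintro ⟨h1, h2⟩
      obtain ⟨hx, hpx⟩ := Finset.mem_filter.mp h1
      exact ⟨hx, by rw [hS _ (not_le.mpr hpx), h2]⟩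
  obtain ⟨i, j, hij, hnm⟩ := hrel c hcmono hcsurj
  rcases Fin.eq_zero_or_eq_succ i with rfl | ⟨i₀, rfl⟩
  · rcases Fin.eq_zero_or_eq_succ j with rfl | ⟨j₀, rfl⟩
    · exact absurd rfl hij
    · exfalso
      obtain ⟨t, htX₂, hct⟩ := hcs' j₀
      obtain ⟨htX, hpt⟩ := Finset.mem_filter.mp htX₂
      refine core_contra G part hRMP hQ hB hpX htX hpt hKcl hKX hKw hzK hzp ?_ ?_ hnm
      · intro x h1 h2; exact (hpred0 x).mpr ⟨h1, h2⟩
      · intro y hy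
        refine ⟨by rw [hy]; exact htX, ?_⟩
        rw [hy, hS _ (not_le.mpr hpt), hct]
  · rcases Fin.eq_zero_or_eq_succ j with rfl | ⟨j₀, rfl⟩
    · exfalso
      obtain ⟨t, htX₂, hct⟩ := hcs' i₀
      obtain ⟨htX, hpt⟩ := Finset.mem_filter.mp htX₂
      refine core_contra G part hRMP hQ hB hpX htX hpt hKcl hKX hKw hzK hzp ?_ ?_
        (fun hm => hnm (zoneMixed_swap (fun x y => adjMat_symm x y) hm))
      · intro x h1 h2; exact (hpred0 x).mpr ⟨h1, h2⟩
      · intro y hy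
        refine ⟨by rw [hy]; exact htX, ?_⟩
        rw [hy, hS _ (not_le.mpr hpt), hct]
    · refine ⟨i₀, j₀, fun h => hij (by rw [h]), ?_⟩
      intro hm
      exact hnm (zoneMixed_mono (fun x hx => (hpredS i₀ x).mpr hx)
        (fun y hy => (hpredS j₀ y).mpr hy) hm)

end Suffix

section MainBound
variable {n k : ℕ} (G : SimpleGraph (Fin n)) (part : Fin n → Fin k)

lemma main_bound (hRMP : IsRMP G part) :
    ∀ m w e (X : Finset (Fin k)), w + e ≤ m → 1 ≤ e →
      QCliqueOn G part X → CliqueBnd G part w X → RelAMF G part X e →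
      X.card ≤ w ^ e := by
  intro m
  induction m with
  | zero => intro w e X hm he _ _ _; omega
  | succ m ih =>
    intro w e X hm he hQ hB hrel
    classical
    rcases X.eq_empty_or_nonempty with rfl | hXne
    · simp
    -- w ≥ 1
    have hw1 : 1 ≤ w := by
      obtain ⟨x, hx⟩ := hXne
      obtain ⟨v, hv⟩ := hRMP.2.1 x
      have h := hB {v} (by rw [Finset.coe_singleton]; exact SimpleGraph.isClique_singleton v)
        (by intro v' hv'; rw [Finset.mem_singleton.mp hv', hv]; exact hx)
      simpa using h
    obtain ⟨e', rfl⟩ : ∃ e', e = e' + 1 := ⟨e - 1, by omega⟩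
    by_cases he' : e' = 0
    · subst he'
      exfalso
      obtain ⟨x, hx⟩ := hXne
      have hone : ∀ a : Fin (0 + 1), a = 0 := fun a => by
        have := a.isLt
        exact Fin.ext (by omega)
      obtain ⟨i, j, hij, -⟩ := hrel (fun _ => 0) monotone_const
        (fun t => ⟨x, hx, (hone _).trans (hone t).symm⟩)
      exact hij ((hone i).trans (hone j).symm)
    by_cases hsmall : X.card ≤ 1
    · calc X.card ≤ 1 := hsmall
        _ ≤ w ^ (e' + 1) := Nat.one_le_pow _ _ (by omega)
    push_neg at hsmall
    have hw2 : 2 ≤ w := by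
      obtain ⟨a, ha, b, hb, hab⟩ := Finset.one_lt_card.mp hsmall
      obtain ⟨u, v, hu, hv, hadj⟩ := hQ a ha b hb hab
      have huv : u ≠ v := hadj.ne
      have hKcl : G.IsClique (({u, v} : Finset (Fin n)) : Set (Fin n)) := by
        rw [Finset.coe_insert, Finset.coe_singleton]
        exact SimpleGraph.isClique_pair.mpr (fun _ => hadj)
      have h := hB {u, v} hKcl (by
        intro x hx
        rcases Finset.mem_insert.mp hx with rfl | hx
        · rw [hu]; exact ha
        · rw [Finset.mem_singleton.mp hx, hv]; exact hb)
      rwa [Finset.card_pair huv] at h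
    by_cases hBw1 : CliqueBnd G part (w - 1) X
    · have h := ih (w - 1) (e' + 1) X (by omega) (by omega) hQ hBw1 hrel
      calc X.card ≤ (w - 1) ^ (e' + 1) := h
        _ ≤ w ^ (e' + 1) := Nat.pow_le_pow_left (by omega) _
    unfold CliqueBnd at hBw1
    push_neg at hBw1
    obtain ⟨K₀, hK₀cl, hK₀X, hK₀card⟩ := hBw1
    have hK₀w : w ≤ K₀.card := by omega
    set S := X.filter (fun q => ∃ K : Finset (Fin n), G.IsClique (K : Set (Fin n)) ∧
      (∀ v ∈ K, part v ∈ X ∧ part v ≤ q) ∧ w ≤ K.card) with hSdef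
    have hSne : S.Nonempty := by
      refine ⟨X.max' hXne, Finset.mem_filter.mpr ⟨X.max'_mem hXne, K₀, hK₀cl, ?_, hK₀w⟩⟩
      exact fun v hv => ⟨hK₀X v hv, Finset.le_max' X _ (hK₀X v hv)⟩
    set p := S.min' hSne with hpdef
    have hpS : p ∈ S := S.min'_mem hSne
    have hpX : p ∈ X := (Finset.mem_filter.mp hpS).1
    obtain ⟨K, hKcl, hKX, hKw⟩ := (Finset.mem_filter.mp hpS).2
    have hKne : K.Nonempty := Finset.card_pos.mp (by omega)
    obtain ⟨z, hzK, hzpm⟩ := Finset.mem_image.mp ((K.image part).max'_mem (hKne.image part))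
    have hpm_le : (K.image part).max' (hKne.image part) ≤ p := by
      apply Finset.max'_le
      intro y hy
      obtain ⟨a, haK, rfl⟩ := Finset.mem_image.mp hy
      exact (hKX a haK).2
    have hpmS : (K.image part).max' (hKne.image part) ∈ S := by
      refine Finset.mem_filter.mpr ⟨by rw [← hzpm]; exact (hKX z hzK).1, K, hKcl, ?_, hKw⟩
      exact fun v hv => ⟨(hKX v hv).1, Finset.le_max' _ _ (Finset.mem_image_of_mem part hv)⟩
    have hzp : part z = p :=
      hzpm.trans (le_antisymm hpm_le (S.min'_le _ hpmS))
    set X₁ := X.filter (fun q => q < p) with hX₁def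
    set X₂ := X.filter (fun q => p < q) with hX₂def
    have hcard : X.card = X₁.card + 1 + X₂.card := by
      have h1 : X₁.card + (X.filter (fun q => ¬ q < p)).card = X.card :=
        Finset.card_filter_add_card_filter_not _
      have h2 : X.filter (fun q => ¬ q < p) = insert p X₂ := by
        ext q
        simp only [Finset.mem_filter, Finset.mem_insert, hX₂def]
        constructor
        · rintro ⟨hqX, hq⟩
          rcases lt_or_eq_of_le (not_lt.mp hq) with h | h
          · exact Or.inr ⟨hqX, h⟩
          · exact Or.inl h.symm
        · rintro (rfl | ⟨hqX, hq⟩)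
          · exact ⟨hpX, lt_irrefl _⟩
          · exact ⟨hqX, not_lt.mpr (le_of_lt hq)⟩
      have h3 : p ∉ X₂ := by
        simp only [hX₂def, Finset.mem_filter]
        rintro ⟨-, h⟩
        exact lt_irrefl _ h
      rw [h2, Finset.card_insert_of_notMem h3] at h1
      omega
    have hB₁ : CliqueBnd G part (w - 1) X₁ := by
      intro K' hcl' hparts'
      by_contra hgt
      push_neg at hgt
      have hK'ne : K'.Nonempty := Finset.card_pos.mp (by omega)
      obtain ⟨y, hyK', hyq'⟩ :=
        Finset.mem_image.mp ((K'.image part).max'_mem (hK'ne.image part))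
      have hq'X₁ : (K'.image part).max' (hK'ne.image part) ∈ X₁ := by
        rw [← hyq']; exact hparts' y hyK'
      have hq'S : (K'.image part).max' (hK'ne.image part) ∈ S := by
        refine Finset.mem_filter.mpr ⟨(Finset.mem_filter.mp hq'X₁).1, K', hcl', ?_, by omega⟩
        exact fun v hv => ⟨(Finset.mem_filter.mp (hparts' v hv)).1,
          Finset.le_max' _ _ (Finset.mem_image_of_mem part hv)⟩
      have hle := S.min'_le _ hq'S
      have hlt : (K'.image part).max' (hK'ne.image part) < p :=
        (Finset.mem_filter.mp hq'X₁).2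
      exact absurd hle (not_le.mpr hlt)
    have hQ₁ : QCliqueOn G part X₁ := fun i hi j hj hij =>
      hQ i (Finset.mem_filter.mp hi).1 j (Finset.mem_filter.mp hj).1 hij
    have h₁ : X₁.card ≤ (w - 1) ^ (e' + 1) :=
      ih (w - 1) (e' + 1) X₁ (by omega) (by omega) hQ₁ hB₁
        (relAMF_mono G part (Finset.filter_subset _ _) hrel)
    have hrel₂ : RelAMF G part X₂ e' :=
      relAMF_suffix G part hRMP hQ hB hpX hKcl hKX hKw hzK hzp hrel
    have hQ₂ : QCliqueOn G part X₂ := fun i hi j hj hij =>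
      hQ i (Finset.mem_filter.mp hi).1 j (Finset.mem_filter.mp hj).1 hij
    have hB₂ : CliqueBnd G part w X₂ := fun K' hcl hparts =>
      hB K' hcl (fun v hv => (Finset.mem_filter.mp (hparts v hv)).1)
    have h₂ : X₂.card ≤ w ^ e' := ih w e' X₂ (by omega) (by omega) hQ₂ hB₂ hrel₂
    obtain ⟨v, rfl⟩ : ∃ v, w = v + 2 := ⟨w - 2, by omega⟩
    have hsub : v + 2 - 1 = v + 1 := by omega
    rw [hsub] at h₁
    have hab : (v + 1) ^ e' + 1 ≤ (v + 2) ^ e' :=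
      Nat.pow_lt_pow_left (by omega) he'
    have hkey : (v + 1) ^ (e' + 1) + 1 + (v + 2) ^ e' ≤ (v + 2) ^ (e' + 1) := by
      calc (v + 1) ^ (e' + 1) + 1 + (v + 2) ^ e'
          = (v + 1) ^ e' * (v + 1) + 1 + (v + 2) ^ e' := by rw [pow_succ]
        _ ≤ (v + 1) ^ e' * (v + 1) + (v + 1) + (v + 2) ^ e' := by omega
        _ = ((v + 1) ^ e' + 1) * (v + 1) + (v + 2) ^ e' := by ring
        _ ≤ (v + 2) ^ e' * (v + 1) + (v + 2) ^ e' :=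
            Nat.add_le_add_right (Nat.mul_le_mul hab le_rfl) _
        _ = (v + 2) ^ e' * (v + 2) := by ring
        _ = (v + 2) ^ (e' + 1) := (pow_succ _ _).symm
    rw [hcard]
    exact le_trans (add_le_add (add_le_add h₁ le_rfl) h₂) hkey

end MainBound

/-- The quotient graph `G/P`. -/
def quotGraph {n k : ℕ} (G : SimpleGraph (Fin n)) (part : Fin n → Fin k) :
    SimpleGraph (Fin k) where
  Adj i j := i ≠ j ∧ ∃ u v, part u = i ∧ part v = j ∧ G.Adj u v
  symm := by
    constructor
    rintro i j ⟨hij, u, v, hu, hv, hadj⟩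
    exact ⟨hij.symm, v, u, hv, hu, hadj.symm⟩
  loopless := by
    constructor
    rintro i ⟨hii, -⟩
    exact hii rfl

lemma quotGraph_adj {n k : ℕ} (G : SimpleGraph (Fin n)) (part : Fin n → Fin k)
    (i j : Fin k) :
    (quotGraph G part).Adj i j ↔ i ≠ j ∧ ∃ u v, part u = i ∧ part v = j ∧ G.Adj u v :=
  Iff.rfl

/-- Let `C` be a class of ordered graphs with polynomial χ-bounding function
`x ↦ x^c`. If `part` is a `C`-right-module-partition of `G` such that
`(G, part)` is `d`-almost mixed free, then `χ(G) ≤ ω(G)^{cd}`. -/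
theorem colorable_of_CRMP_almostMixedFree {n k d c : ℕ} (hd : 1 ≤ d)
    (C : ∀ m : ℕ, SimpleGraph (Fin m) → Prop)
    (hchi : ∀ (m : ℕ) (H : SimpleGraph (Fin m)), C m H →
      H.Colorable (H.cliqueNum ^ c))
    (G : SimpleGraph (Fin n)) (part : Fin n → Fin k)
    (hCRMP : IsCRMP C G part) (hAMF : AlmostMixedFreePair G part d) :
    G.Colorable (G.cliqueNum ^ (c * d)) := by
  classical
  obtain ⟨hRMP, hTM⟩ := hCRMP
  obtain ⟨hmono, hsurj, hind, hmod⟩ := hRMP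
  set Q := quotGraph G part with hQdef
  have hQC : C k Q := by
    apply hTM k Q
    refine ⟨id, fun i => Finset.univ.filter (fun v => part v = i), strictMono_id, ?_, ?_, ?_⟩
    · intro a
      obtain ⟨v, hv⟩ := hsurj a
      exact ⟨v, Finset.mem_filter.mpr ⟨Finset.mem_univ v, hv⟩⟩
    · intro a v hv
      exact (Finset.mem_filter.mp hv).2
    · intro a b
      rw [quotGraph_adj]
      constructor
      · rintro ⟨hab, u, v, hu, hv, hadj⟩
        exact ⟨hab, u, Finset.mem_filter.mpr ⟨Finset.mem_univ _, hu⟩,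
          v, Finset.mem_filter.mpr ⟨Finset.mem_univ _, hv⟩, hadj⟩
      · rintro ⟨hab, u, hu, v, hv, hadj⟩
        exact ⟨hab, u, v, (Finset.mem_filter.mp hu).2, (Finset.mem_filter.mp hv).2, hadj⟩
  have hQcol : Q.Colorable (Q.cliqueNum ^ c) := hchi k Q hQC
  have hGcol : G.Colorable (Q.cliqueNum ^ c) := by
    obtain ⟨f⟩ := hQcol
    refine ⟨SimpleGraph.Coloring.mk (fun v => f (part v)) ?_⟩
    intro u v hadj
    have hne : part u ≠ part v := fun h => hind u v h hadj
    exact f.valid ((quotGraph_adj G part _ _).mpr ⟨hne, u, v, rfl, rfl, hadj⟩)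
  have hcl : Q.cliqueNum ≤ G.cliqueNum ^ d := by
    obtain ⟨s, hs⟩ := Q.exists_isNClique_cliqueNum
    rw [← hs.card_eq]
    refine main_bound G part ⟨hmono, hsurj, hind, hmod⟩ (G.cliqueNum + d) G.cliqueNum d s
      le_rfl hd ?_ ?_ (relAMF_of_AMF G part hAMF s)
    · intro i hi j hj hij
      have h := hs.isClique (Finset.mem_coe.mpr hi) (Finset.mem_coe.mpr hj) hij
      exact ((quotGraph_adj G part i j).mp h).2
    · intro K hKcl _
      exact SimpleGraph.IsClique.card_le_cliqueNum (tc := hKcl)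
  apply hGcol.mono
  calc Q.cliqueNum ^ c ≤ (G.cliqueNum ^ d) ^ c := Nat.pow_le_pow_left hcl c
    _ = G.cliqueNum ^ (d * c) := (pow_mul _ _ _).symm
    _ = G.cliqueNum ^ (c * d) := by rw [Nat.mul_comm]
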